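/- Let P ≥ 1 and let T₁, …, T_P be binary computation trees. Then the maximum number of steals from the multiset {T₁, …, T_P} equals the maximum, over all permutations σ of {1, …, P}, of ∑_{i=1}^{P} Φ(T_{σ(i)}, i−1); that is, steals({T₁, …, T_P}) = max_{σ ∈ S_P} ( Φ(T_{σ(1)}, 0) + Φ(T_{σ(2)}, 1) + ⋯ + Φ(T_{σ(P)}, P−1) ). -/

import Mathlib

/-- A binary computation tree: a single node, or a root with two subtrees. -/
inductive BTree : Type
  | triv : BTree
  | node : BTree → BTree → BTree
  deriving DecidableEq

/-- A steal step on a multiset of binary computation trees: choose an arbitrary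
tree `U` and a tree `node l r` from the multiset, and replace them by `l` and `r`. -/
def StealStep (S S' : Multiset BTree) : Prop :=
  ∃ (U l r : BTree) (S₀ : Multiset BTree),
    S = U ::ₘ BTree.node l r ::ₘ S₀ ∧ S' = l ::ₘ r ::ₘ S₀

/-- `StealSeq n S` means there exists a sequence of `n` steal steps starting from `S`. -/
def StealSeq : ℕ → Multiset BTree → Prop
  | 0, _ => True
  | n + 1, S => ∃ S', StealStep S S' ∧ StealSeq n S'

/-- The maximum length of a sequence of steal steps starting from `S`. -/
noncomputable def steals (S : Multiset BTree) : ℕ :=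
  sSup {n | StealSeq n S}

/-- The `n`-th potential of `T`: the maximum number of steals starting from a
configuration with one processor owning `T` and `n` processors with trivial trees. -/
noncomputable def Phi (T : BTree) (n : ℕ) : ℕ :=
  steals (T ::ₘ Multiset.replicate n BTree.triv)


/-- number of nodes of a tree -/
def bsize : BTree → ℕ
  | .triv => 1
  | .node l r => bsize l + bsize r + 1

def msize (S : Multiset BTree) : ℕ := (S.map bsize).sum

lemma bsize_pos (T : BTree) : 1 ≤ bsize T := by
  cases T <;> simp [bsize]

lemma _root_.StealStep.msize_lt {S S' : Multiset BTree} (h : StealStep S S') :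
    msize S' < msize S := by
  obtain ⟨U, l, r, S₀, rfl, rfl⟩ := h
  simp only [msize, Multiset.map_cons, Multiset.sum_cons, bsize]
  have := bsize_pos U
  omega

lemma stealSeq_le_msize : ∀ (n : ℕ) (S : Multiset BTree), StealSeq n S → n ≤ msize S := by
  intro n
  induction n with
  | zero => intro S _; exact Nat.zero_le _
  | succ n ih =>
    rintro S ⟨S', hs, hseq⟩
    have := ih S' hseq
    have := hs.msize_lt
    omega

lemma bddAbove_stealSeq (S : Multiset BTree) : BddAbove {n | StealSeq n S} :=
  ⟨msize S, fun n hn => stealSeq_le_msize n S hn⟩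

lemma stealSeq_steals (S : Multiset BTree) : StealSeq (steals S) S :=
  Nat.sSup_mem ⟨0, show StealSeq 0 S from trivial⟩ (bddAbove_stealSeq S)

lemma le_steals {n : ℕ} {S : Multiset BTree} (h : StealSeq n S) : n ≤ steals S :=
  le_csSup (bddAbove_stealSeq S) h

lemma steals_le {m : ℕ} {S : Multiset BTree} (h : ∀ n, StealSeq n S → n ≤ m) :
    steals S ≤ m :=
  csSup_le ⟨0, show StealSeq 0 S from trivial⟩ h

/-- reachability in `n` steal steps -/
inductive Reach : ℕ → Multiset BTree → Multiset BTree → Prop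
  | refl (S : Multiset BTree) : Reach 0 S S
  | step {n : ℕ} {S S' E : Multiset BTree} :
      StealStep S S' → Reach n S' E → Reach (n + 1) S E

lemma stealSeq_iff_reach : ∀ (n : ℕ) (S : Multiset BTree),
    StealSeq n S ↔ ∃ E, Reach n S E := by
  intro n
  induction n with
  | zero => intro S; exact ⟨fun _ => ⟨S, Reach.refl S⟩, fun _ => trivial⟩
  | succ n ih =>
    intro S
    constructor
    · rintro ⟨S', hs, hseq⟩
      obtain ⟨E, hE⟩ := (ih S').mp hseq
      exact ⟨E, Reach.step hs hE⟩
    · rintro ⟨E, hE⟩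
      cases hE with
      | step hs hE' => exact ⟨_, hs, (ih _).mpr ⟨E, hE'⟩⟩

lemma _root_.Reach.add {m n : ℕ} {S E F : Multiset BTree}
    (h1 : Reach m S E) (h2 : Reach n E F) : Reach (m + n) S F := by
  induction h1 with
  | refl => simpa using h2
  | step hs _ ih =>
    have := Reach.step hs (ih h2)
    convert this using 1
    omega

lemma _root_.StealStep.add_right {S S' : Multiset BTree} (h : StealStep S S')
    (W : Multiset BTree) : StealStep (S + W) (S' + W) := by
  obtain ⟨U, l, r, S₀, rfl, rfl⟩ := h
  exact ⟨U, l, r, S₀ + W, by simp [Multiset.cons_add], by simp [Multiset.cons_add]⟩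

lemma _root_.Reach.add_right {n : ℕ} {S E : Multiset BTree} (h : Reach n S E)
    (W : Multiset BTree) : Reach n (S + W) (E + W) := by
  induction h with
  | refl => exact Reach.refl _
  | step hs _ ih => exact Reach.step (hs.add_right W) ih

lemma _root_.Reach.le_steals {n : ℕ} {S E : Multiset BTree} (h : Reach n S E) :
    n + steals E ≤ steals S := by
  obtain ⟨F, hF⟩ := (stealSeq_iff_reach _ E).mp (stealSeq_steals E)
  exact _root_.le_steals ((stealSeq_iff_reach _ S).mpr ⟨F, h.add hF⟩)

lemma _root_.StealStep.card {S S' : Multiset BTree} (h : StealStep S S') :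
    Multiset.card S' = Multiset.card S := by
  obtain ⟨U, l, r, S₀, rfl, rfl⟩ := h
  simp

lemma _root_.Reach.card {n : ℕ} {S E : Multiset BTree} (h : Reach n S E) :
    Multiset.card E = Multiset.card S := by
  induction h with
  | refl => rfl
  | step hs _ ih => rw [ih, hs.card]


/-- domination: `a` is at least as useful as `b` -/
def relT (a b : BTree) : Prop := b = BTree.triv ∨ a = b

lemma rel_rep (R : Multiset BTree) :
    Multiset.Rel relT R (Multiset.replicate (Multiset.card R) BTree.triv) :=
  Multiset.rel_replicate_right.mpr ⟨rfl, fun _ _ => Or.inl rfl⟩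

lemma Reach.transfer {n : ℕ} {S₁ E₁ : Multiset BTree} (h : Reach n S₁ E₁) :
    ∀ S₂ : Multiset BTree, Multiset.Rel relT S₂ S₁ →
      ∃ E₂, Reach n S₂ E₂ ∧ Multiset.Rel relT E₂ E₁ := by
  induction h with
  | refl S => exact fun S₂ hrel => ⟨S₂, Reach.refl S₂, hrel⟩
  | @step n S S' E hs hr ih =>
    rintro S₂ hrel
    obtain ⟨U, l, r, S₀, rfl, rfl⟩ := hs
    obtain ⟨a, m, ha, hm, rfl⟩ := Multiset.rel_cons_right.mp hrel
    obtain ⟨c, S₀₂, hc, hS₀₂, rfl⟩ := Multiset.rel_cons_right.mp hm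
    have hcnode : c = BTree.node l r := by
      rcases hc with h' | h'
      · exact absurd h' (by simp)
      · exact h'
    subst hcnode
    have hstep : StealStep (a ::ₘ BTree.node l r ::ₘ S₀₂) (l ::ₘ r ::ₘ S₀₂) :=
      ⟨a, l, r, S₀₂, rfl, rfl⟩
    obtain ⟨E₂, hE₂, hrelE⟩ := ih (l ::ₘ r ::ₘ S₀₂)
      (Multiset.Rel.cons (show relT l l from Or.inr rfl) (Multiset.Rel.cons (show relT r r from Or.inr rfl) hS₀₂))
    exact ⟨E₂, Reach.step hstep hE₂, hrelE⟩

/-- value of a list of trees with starting offset `k` -/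
noncomputable def val : ℕ → List BTree → ℕ
  | _, [] => 0
  | k, a :: L => Phi a k + val (k + 1) L

lemma val_append (X : List BTree) : ∀ (Y : List BTree) (k : ℕ),
    val k (X ++ Y) = val k X + val (k + X.length) Y := by
  induction X with
  | nil => intro Y k; simp [val]
  | cons a X ih =>
    intro Y k
    show Phi a k + val (k + 1) (X ++ Y) = (Phi a k + val (k + 1) X) + val (k + (X.length + 1)) Y
    rw [ih, show k + (X.length + 1) = k + 1 + X.length from by omega]
    ring

lemma steals_cons_le (a : BTree) (S : Multiset BTree) : steals S ≤ steals (a ::ₘ S) := by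
  obtain ⟨E, hE⟩ := (stealSeq_iff_reach _ S).mp (stealSeq_steals S)
  have := (hE.add_right {a}).le_steals
  have h1 : S + {a} = a ::ₘ S := by
    rw [add_comm, Multiset.singleton_add]
  rw [h1] at this
  omega

lemma Phi_mono (T : BTree) : Monotone (Phi T) := by
  apply monotone_nat_of_le_succ
  intro n
  have h : T ::ₘ Multiset.replicate (n + 1) BTree.triv
      = BTree.triv ::ₘ T ::ₘ Multiset.replicate n BTree.triv := by
    rw [Multiset.replicate_succ, Multiset.cons_swap]
  show steals (T ::ₘ Multiset.replicate n BTree.triv)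
    ≤ steals (T ::ₘ Multiset.replicate (n + 1) BTree.triv)
  rw [h]
  exact steals_cons_le _ _

lemma val_mono (L : List BTree) : ∀ {k k' : ℕ}, k ≤ k' → val k L ≤ val k' L := by
  induction L with
  | nil => intro k k' _; simp [val]
  | cons a L ih =>
    intro k k' h
    simp only [val]
    exact Nat.add_le_add (Phi_mono a h) (ih (by omega))

/-- the fundamental lower bound -/
lemma lb : ∀ (L : List BTree) (R : Multiset BTree),
    val (Multiset.card R) L ≤ steals ((L : Multiset BTree) + R) := by
  intro L
  induction L with
  | nil => intro R; simp [val]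
  | cons A L ih =>
    intro R
    -- the maximal sequence from A + |R| trivs
    obtain ⟨E, hE⟩ := (stealSeq_iff_reach _ _).mp
      (stealSeq_steals (A ::ₘ Multiset.replicate (Multiset.card R) BTree.triv))
    obtain ⟨E₂, hE₂, hrel⟩ := hE.transfer (A ::ₘ R) (Multiset.Rel.cons (Or.inr rfl) (rel_rep R))
    have hcard : Multiset.card E₂ = Multiset.card R + 1 := by
      have h1 := Multiset.card_eq_card_of_rel hrel
      have h2 := hE.card
      simp at h2 ⊢
      omega
    have hreach := hE₂.add_right (L : Multiset BTree)
    have hset : ((A :: L : List BTree) : Multiset BTree) + R = (A ::ₘ R) + (L : Multiset BTree) := by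
      show (A ::ₘ (L : Multiset BTree)) + R = (A ::ₘ R) + (L : Multiset BTree)
      rw [Multiset.cons_add, Multiset.cons_add, add_comm R]
    have hle := hreach.le_steals
    have hle2 : steals ((L : Multiset BTree) + E₂) ≥ val (Multiset.card E₂) L := ih E₂
    rw [hset]
    calc val (Multiset.card R) (A :: L)
        = Phi A (Multiset.card R) + val (Multiset.card R + 1) L := rfl
      _ ≤ Phi A (Multiset.card R) + steals ((L : Multiset BTree) + E₂) := by
          rw [← hcard]; omega
      _ ≤ steals ((A ::ₘ R) + (L : Multiset BTree)) := by
          have hPhi : Phi A (Multiset.card R)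
              = steals (A ::ₘ Multiset.replicate (Multiset.card R) BTree.triv) := rfl
          rw [add_comm E₂ _] at hle
          omega

lemma key_aux (l r : BTree) (m : ℕ) :
    1 + steals (l ::ₘ r ::ₘ Multiset.replicate m BTree.triv)
      ≤ Phi (BTree.node l r) (m + 1) := by
  have hstep : StealStep (BTree.node l r ::ₘ Multiset.replicate (m + 1) BTree.triv)
      (l ::ₘ r ::ₘ Multiset.replicate m BTree.triv) := by
    refine ⟨BTree.triv, l, r, Multiset.replicate m BTree.triv, ?_, rfl⟩
    rw [Multiset.replicate_succ, Multiset.cons_swap]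
  have := (Reach.step hstep (Reach.refl _)).le_steals
  exact this

lemma coe_pair_add (x y : BTree) (R : Multiset BTree) :
    (([x, y] : List BTree) : Multiset BTree) + R = x ::ₘ y ::ₘ R := by
  show (x ::ₘ y ::ₘ 0) + R = x ::ₘ y ::ₘ R
  rw [Multiset.cons_add, Multiset.cons_add, zero_add]

lemma key (l r : BTree) (m : ℕ) :
    Phi l m + Phi r (m + 1) + 1 ≤ Phi (BTree.node l r) (m + 1) := by
  have h1 := key_aux l r m
  have h2 := lb [l, r] (Multiset.replicate m BTree.triv)
  rw [Multiset.card_replicate, coe_pair_add] at h2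
  have hv : val m [l, r] = Phi l m + (Phi r (m + 1) + 0) := rfl
  omega

lemma key' (l r : BTree) (m : ℕ) :
    Phi r m + Phi l (m + 1) + 1 ≤ Phi (BTree.node l r) (m + 1) := by
  have h1 := key_aux l r m
  have h2 := lb [r, l] (Multiset.replicate m BTree.triv)
  rw [Multiset.card_replicate, coe_pair_add, Multiset.cons_swap] at h2
  have hv : val m [r, l] = Phi r m + (Phi l (m + 1) + 0) := rfl
  omega

lemma ub : ∀ (n : ℕ) (S : Multiset BTree), StealSeq n S →
    ∃ L : List BTree, (L : Multiset BTree) = S ∧ n ≤ val 0 L := by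
  intro n
  induction n with
  | zero => intro S _; exact ⟨S.toList, S.coe_toList, Nat.zero_le _⟩
  | succ n ih =>
    rintro S ⟨S', ⟨U, l, r, S₀, rfl, rfl⟩, hseq⟩
    obtain ⟨L', hL', hval⟩ := ih _ hseq
    have hl : l ∈ L' := by rw [← Multiset.mem_coe, hL']; simp
    obtain ⟨A, B, rfl⟩ := List.append_of_mem hl
    have hAB : (A : Multiset BTree) + (B : Multiset BTree) = r ::ₘ S₀ := by
      have h5 : ((A ++ l :: B : List BTree) : Multiset BTree)
          = l ::ₘ ((A : Multiset BTree) + (B : Multiset BTree)) := by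
        simp [← Multiset.coe_add, ← Multiset.cons_coe, Multiset.add_cons]
      rw [h5] at hL'
      exact (Multiset.cons_inj_right l).mp hL'
    have hr : r ∈ A ∨ r ∈ B := by
      have : r ∈ (A : Multiset BTree) + (B : Multiset BTree) := by
        rw [hAB]; exact Multiset.mem_cons_self r S₀
      simpa [Multiset.mem_coe] using this
    rcases hr with hr | hr
    · -- r in A
      obtain ⟨A₁, A₂, rfl⟩ := List.append_of_mem hr
      have hS₀ : S₀ = (A₁ : Multiset BTree) + (A₂ : Multiset BTree) + (B : Multiset BTree) := by
        have h5 : ((A₁ ++ r :: A₂ : List BTree) : Multiset BTree) + (B : Multiset BTree)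
            = r ::ₘ ((A₁ : Multiset BTree) + (A₂ : Multiset BTree) + (B : Multiset BTree)) := by
          simp [← Multiset.coe_add, ← Multiset.cons_coe, Multiset.add_cons, Multiset.cons_add,
            add_assoc]
        rw [h5] at hAB
        exact ((Multiset.cons_inj_right r).mp hAB).symm
      refine ⟨U :: (A₁ ++ (A₂ ++ (BTree.node l r :: B))), ?_, ?_⟩
      · rw [hS₀]
        show (U ::ₘ ((A₁ ++ (A₂ ++ (BTree.node l r :: B)) : List BTree) : Multiset BTree)) = _
        simp [← Multiset.coe_add, ← Multiset.cons_coe, Multiset.add_cons, Multiset.cons_add,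
          add_assoc]
      · have h2 : val 0 A₁ ≤ val 1 A₁ := val_mono A₁ (by omega)
        have h3 : Phi r A₁.length ≤ Phi r (A₁.length + A₂.length) := Phi_mono r (by omega)
        have h4 := key' l r (A₁.length + A₂.length)
        simp only [val_append, val, List.length_cons, List.length_append] at hval ⊢
        ring_nf at hval h2 h3 h4 ⊢
        omega
    · -- r in B
      obtain ⟨B₁, B₂, rfl⟩ := List.append_of_mem hr
      have hS₀ : S₀ = (A : Multiset BTree) + (B₁ : Multiset BTree) + (B₂ : Multiset BTree) := by
        have h5 : (A : Multiset BTree) + ((B₁ ++ r :: B₂ : List BTree) : Multiset BTree)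
            = r ::ₘ ((A : Multiset BTree) + (B₁ : Multiset BTree) + (B₂ : Multiset BTree)) := by
          simp [← Multiset.coe_add, ← Multiset.cons_coe, Multiset.add_cons, Multiset.cons_add,
            add_assoc]
        rw [h5] at hAB
        exact ((Multiset.cons_inj_right r).mp hAB).symm
      refine ⟨U :: (A ++ (B₁ ++ (BTree.node l r :: B₂))), ?_, ?_⟩
      · rw [hS₀]
        show (U ::ₘ ((A ++ (B₁ ++ (BTree.node l r :: B₂)) : List BTree) : Multiset BTree)) = _
        simp [← Multiset.coe_add, ← Multiset.cons_coe, Multiset.add_cons, Multiset.cons_add,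
          add_assoc]
      · have h2 : val 0 A ≤ val 1 A := val_mono A (by omega)
        have h3 : Phi l A.length ≤ Phi l (A.length + B₁.length) := Phi_mono l (by omega)
        have h4 := key l r (A.length + B₁.length)
        simp only [val_append, val, List.length_cons, List.length_append] at hval ⊢
        ring_nf at hval h2 h3 h4 ⊢
        omega

lemma ofFn_perm_cons {α : Type*} {n : ℕ} (f : Fin (n + 1) → α) (i₀ : Fin (n + 1)) :
    (List.ofFn f).Perm (f i₀ :: List.ofFn (f ∘ i₀.succAbove)) := by
  have hnodup2 : (i₀ :: (List.finRange n).map i₀.succAbove).Nodup := by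
    refine List.nodup_cons.mpr ⟨?_, (List.nodup_finRange n).map Fin.succAbove_right_injective⟩
    simp only [List.mem_map]
    rintro ⟨j, -, hj⟩
    exact Fin.succAbove_ne i₀ j hj
  have hperm : (List.finRange (n + 1)).Perm (i₀ :: (List.finRange n).map i₀.succAbove) := by
    rw [List.perm_ext_iff_of_nodup (List.nodup_finRange _) hnodup2]
    intro x
    simp only [List.mem_finRange, List.mem_cons, List.mem_map, true_iff]
    by_cases hx : x = i₀
    · exact Or.inl hx
    · obtain ⟨j, hj⟩ := Fin.exists_succAbove_eq hx
      exact Or.inr ⟨j, trivial, hj⟩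
  have := hperm.map f
  rw [List.map_cons, List.map_map] at this
  rw [List.ofFn_eq_map, List.ofFn_eq_map]
  exact this

lemma exists_perm_ofFn : ∀ (n : ℕ) (f : Fin n → BTree) (L : List BTree),
    L.Perm (List.ofFn f) → ∃ σ : Equiv.Perm (Fin n), L = List.ofFn (f ∘ σ) := by
  intro n
  induction n with
  | zero =>
    intro f L h
    refine ⟨1, ?_⟩
    have : L = [] := List.perm_nil.mp (by simpa using h)
    simp [this]
  | succ n ih =>
    intro f L h
    cases L with
    | nil =>
      exfalso
      have := List.perm_nil.mp h.symm
      simp [List.ofFn_succ] at this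
    | cons a L' =>
      have ha : a ∈ List.ofFn f := h.mem_iff.mp List.mem_cons_self
      obtain ⟨i₀, rfl⟩ : ∃ i₀, f i₀ = a := by
        rw [List.mem_ofFn] at ha; exact ha
      have h3 : L'.Perm (List.ofFn (f ∘ i₀.succAbove)) :=
        (h.trans (ofFn_perm_cons f i₀)).cons_inv
      obtain ⟨σ', hσ'⟩ := ih (f ∘ i₀.succAbove) L' h3
      set σbig : Equiv.Perm (Fin (n + 1)) :=
        (finSuccEquiv n).trans ((σ'.optionCongr).trans (finSuccEquiv' i₀).symm) with hσbig
      have h0 : σbig 0 = i₀ := by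
        simp [hσbig, finSuccEquiv_zero, finSuccEquiv'_symm_none]
      have hsucc : ∀ j : Fin n, σbig j.succ = i₀.succAbove (σ' j) := by
        intro j
        simp [hσbig, finSuccEquiv_succ, finSuccEquiv'_symm_some]
      have htail : L' = List.ofFn fun i => f (σbig i.succ) := by
        rw [hσ']
        congr 1
      refine ⟨σbig, ?_⟩
      rw [List.ofFn_succ, htail]
      congr 1

lemma val_ofFn : ∀ (n : ℕ) (g : Fin n → BTree) (k : ℕ),
    val k (List.ofFn g) = ∑ i : Fin n, Phi (g i) (k + i.val) := by
  intro n
  induction n with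
  | zero => intro g k; simp [List.ofFn_zero, val]
  | succ n ih =>
    intro g k
    rw [List.ofFn_succ]
    show Phi (g 0) k + val (k + 1) (List.ofFn fun i => g i.succ) = _
    rw [ih, Fin.sum_univ_succ]
    simp only [Fin.val_succ, Fin.val_zero, Nat.add_zero]
    congr 1
    refine Finset.sum_congr rfl fun i _ => ?_
    congr 1
    omega

theorem steals_eq_max_over_perms (P : ℕ) (hP : 1 ≤ P) (T : Fin P → BTree) :
    steals (Multiset.map T Finset.univ.val) =
      Finset.univ.sup' Finset.univ_nonempty
        (fun σ : Equiv.Perm (Fin P) => ∑ i : Fin P, Phi (T (σ i)) i.val) := by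
  have : NeZero P := ⟨by omega⟩
  apply le_antisymm
  · obtain ⟨L, hL, hle⟩ := ub (steals (Multiset.map T Finset.univ.val)) _ (stealSeq_steals _)
    have hperm : L.Perm (List.ofFn T) := by
      rw [← Multiset.coe_eq_coe, hL, ← Fin.univ_val_map]
    obtain ⟨σ, rfl⟩ := exists_perm_ofFn P T L hperm
    refine le_trans ?_ (Finset.le_sup' _ (Finset.mem_univ σ))
    rw [val_ofFn] at hle
    simpa using hle
  · apply Finset.sup'_le
    intro σ _
    have h := lb (List.ofFn (T ∘ σ)) 0
    rw [Multiset.card_zero, add_zero] at h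
    have hcoe : ((List.ofFn (T ∘ σ) : List BTree) : Multiset BTree)
        = Multiset.map T Finset.univ.val := by
      rw [← Fin.univ_val_map, show ((T ∘ σ) : Fin P → BTree) = T ∘ ⇑σ from rfl,
        ← Multiset.map_map, Multiset.map_univ_val_equiv]
    rw [hcoe, val_ofFn] at h
    simpa using h
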